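/- Let V be a finite-dimensional vector space over a field k and let f : V → V be a linear endomorphism. If the fixed subspace ker(f − id_V) has dimension at least 2, then ∑_{i=0}^{dim V} (−1)^i · i · Tr(Λ^i f) = 0. -/

import Mathlib

open ExteriorAlgebra

/-- The endomorphism induced by a linear map `f : M →ₗ[R] N` on the `n`-th exterior powers,
obtained by restricting the algebra morphism `ExteriorAlgebra.map f`. -/
noncomputable def exteriorPowerMap {R M N : Type*} [CommRing R]
    [AddCommGroup M] [Module R M] [AddCommGroup N] [Module R N]
    (n : ℕ) (f : M →ₗ[R] N) : ⋀[R]^n M →ₗ[R] ⋀[R]^n N :=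
  (ExteriorAlgebra.map f).toLinearMap.restrict (p := ⋀[R]^n M) (q := ⋀[R]^n N)
    (fun x hx => by
      have h : Submodule.map (ExteriorAlgebra.map f).toLinearMap (⋀[R]^n M) ≤ ⋀[R]^n N := by
        rw [show (⋀[R]^n M : Submodule R (ExteriorAlgebra R M)) =
              LinearMap.range (ι R (M := M)) ^ n from rfl,
          Submodule.map_pow, ExteriorAlgebra.ι_range_map_map]
        exact pow_le_pow_left' (LinearMap.map_le_range) n
      exact h (Submodule.mem_map_of_mem hx))

namespace AWTS

/-! ### Minors of a matrix indexed by finsets -/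

variable {k : Type*} [Field k] {n : ℕ}

noncomputable def minor (M : Matrix (Fin n) (Fin n) k) (S : Finset (Fin n)) : k :=
  Matrix.det (M.submatrix (fun x : {x // x ∈ S} => (x : Fin n)) (fun x : {x // x ∈ S} => (x : Fin n)))

lemma minor_eq {i : ℕ} (M : Matrix (Fin n) (Fin n) k) (S : Finset (Fin n)) (h : S.card = i) :
    minor M S = Matrix.det (M.submatrix (S.orderEmbOfFin h) (S.orderEmbOfFin h)) := by
  rw [minor, ← Matrix.det_submatrix_equiv_self (S.orderIsoOfFin h).toEquiv,
    Matrix.submatrix_submatrix]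
  congr 1

lemma minor_erase (M : Matrix (Fin n) (Fin n) k) {a : Fin n}
    (hcol : ∀ x, M x a = if x = a then 1 else 0)
    {S : Finset (Fin n)} (ha : a ∈ S) : minor M S = minor M (S.erase a) := by
  set m := (S.erase a).card with hm
  have h1 : S.card = m + 1 := by
    have h2 : 1 ≤ S.card := Finset.card_pos.mpr ⟨a, ha⟩
    rw [hm, Finset.card_erase_of_mem ha]
    omega
  set σ := S.orderEmbOfFin h1 with hσ
  obtain ⟨j₀, hj₀⟩ : ∃ j₀, σ j₀ = a := by
    have : a ∈ Set.range ⇑σ := by rw [hσ, Finset.range_orderEmbOfFin]; exact_mod_cast ha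
    exact this
  have hemb : ∀ x : Fin m, σ (j₀.succAbove x) = (S.erase a).orderEmbOfFin hm.symm x := by
    have hsm : StrictMono (fun x : Fin m => σ (j₀.succAbove x)) :=
      fun x y hxy => σ.strictMono ((Fin.strictMono_succAbove j₀) hxy)
    have := Finset.orderEmbOfFin_unique' (s := S.erase a) hm.symm
      (f := OrderEmbedding.ofStrictMono _ hsm) ?_
    · intro x
      exact congrFun (congrArg (fun (g : Fin m ↪o Fin n) => ⇑g) this) x
    · intro x
      refine Finset.mem_erase.mpr ⟨?_, (by exact Finset.orderEmbOfFin_mem S h1 (j₀.succAbove x))⟩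
      intro hc
      exact (Fin.succAbove_ne j₀ x) (σ.injective (hc.trans hj₀.symm))
  rw [minor_eq M S h1, minor_eq M (S.erase a) hm.symm]
  rw [Matrix.det_succ_column (M.submatrix ⇑σ ⇑σ) j₀]
  rw [Finset.sum_eq_single j₀ ?_ (by intro h; exact absurd (Finset.mem_univ j₀) h)]
  · have hentry : (M.submatrix ⇑σ ⇑σ) j₀ j₀ = 1 := by
      rw [Matrix.submatrix_apply, hj₀, hcol, if_pos rfl]
    rw [hentry, mul_one, Even.neg_one_pow (by exact ⟨j₀, rfl⟩ : Even ((j₀ : ℕ) + (j₀ : ℕ))), one_mul,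
      Matrix.submatrix_submatrix, show ⇑σ ∘ j₀.succAbove = ⇑((S.erase a).orderEmbOfFin hm.symm)
        from funext hemb]
  · intro l _ hl
    have hentry : (M.submatrix ⇑σ ⇑σ) l j₀ = 0 := by
      rw [Matrix.submatrix_apply, hj₀, hcol, if_neg (fun hc => hl (σ.injective (hc.trans hj₀.symm)))]
    rw [hentry, mul_zero, zero_mul]

lemma comb [NeZero n] (M : Matrix (Fin n) (Fin n) k) (hn : 2 ≤ n)
    (hcol0 : ∀ x, M x 0 = if x = 0 then 1 else 0)
    (hcol1 : ∀ x, M x 1 = if x = 1 then 1 else 0) :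
    ∑ S ∈ (Finset.univ : Finset (Fin n)).powerset,
      (-1 : k) ^ S.card * (S.card : k) * minor M S = 0 := by
  have h01 : (0 : Fin n) ≠ 1 := by
    intro h
    have h' := congrArg Fin.val h
    rw [Fin.val_zero, Fin.val_one'] at h'
    rw [Nat.mod_eq_of_lt (by omega)] at h'
    omega
  set B := ((Finset.univ : Finset (Fin n)).erase 0).erase 1 with hB
  have h1mem : (1 : Fin n) ∈ (Finset.univ : Finset (Fin n)).erase 0 :=
    Finset.mem_erase.mpr ⟨Ne.symm h01, Finset.mem_univ _⟩
  have hins1 : insert (1 : Fin n) B = (Finset.univ : Finset (Fin n)).erase 0 :=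
    Finset.insert_erase h1mem
  have hins0 : insert (0 : Fin n) ((Finset.univ : Finset (Fin n)).erase 0) = Finset.univ :=
    Finset.insert_erase (Finset.mem_univ _)
  have h0notin : (0 : Fin n) ∉ (Finset.univ : Finset (Fin n)).erase 0 :=
    Finset.notMem_erase _ _
  have h1notinB : (1 : Fin n) ∉ B := Finset.notMem_erase _ _
  rw [← hins0, Finset.sum_powerset_insert h0notin, ← hins1,
    Finset.sum_powerset_insert h1notinB, Finset.sum_powerset_insert h1notinB,
    ← Finset.sum_add_distrib, ← Finset.sum_add_distrib, ← Finset.sum_add_distrib]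
  apply Finset.sum_eq_zero
  intro T hT
  have hTB : T ⊆ B := Finset.mem_powerset.mp hT
  have hT1 : (1 : Fin n) ∉ T := fun hc => h1notinB (hTB hc)
  have hT0 : (0 : Fin n) ∉ T := fun hc => by
    have := hTB hc
    rw [hB] at this
    exact Finset.notMem_erase _ _ (Finset.mem_of_mem_erase this)
  have h0i1 : (0 : Fin n) ∉ insert 1 T := fun hc => by
    rcases Finset.mem_insert.mp hc with h | h
    exacts [h01 h, hT0 h]
  have e1 : minor M (insert 1 T) = minor M T := by
    rw [minor_erase M hcol1 (Finset.mem_insert_self 1 T), Finset.erase_insert hT1]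
  have e0 : minor M (insert 0 T) = minor M T := by
    rw [minor_erase M hcol0 (Finset.mem_insert_self 0 T), Finset.erase_insert hT0]
  have e01 : minor M (insert 0 (insert 1 T)) = minor M T := by
    rw [minor_erase M hcol0 (Finset.mem_insert_self 0 _), Finset.erase_insert h0i1, e1]
  have c1 : (insert (1 : Fin n) T).card = T.card + 1 := Finset.card_insert_of_notMem hT1
  have c0 : (insert (0 : Fin n) T).card = T.card + 1 := Finset.card_insert_of_notMem hT0
  have c01 : (insert (0 : Fin n) (insert 1 T)).card = T.card + 2 := by
    rw [Finset.card_insert_of_notMem h0i1, c1]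
  rw [e1, e0, e01, c1, c0, c01]
  push_cast
  ring

/-! ### A dual spanning family for exterior powers -/

variable {V : Type*} [AddCommGroup V] [Module k V]

lemma coe_exteriorPowerMap {i : ℕ} (f : V →ₗ[k] V) (x : ⋀[k]^i V) :
    (exteriorPowerMap i f x : ExteriorAlgebra k V) = ExteriorAlgebra.map f (x : ExteriorAlgebra k V) :=
  rfl

lemma map_ιMulti {W : Type*} [AddCommGroup W] [Module k W] (f : V →ₗ[k] W) {i : ℕ}
    (v : Fin i → V) :
    ExteriorAlgebra.map f (ιMulti k i v) = ιMulti k i (f ∘ v) := by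
  rw [ιMulti_apply, ιMulti_apply, map_list_prod]
  simp [List.map_ofFn, Function.comp_def]

variable (e : Module.Basis (Fin n) k V)

noncomputable def psi {i : ℕ} (σ : Fin i → Fin n) : V [⋀^Fin i]→ₗ[k] k :=
  Matrix.detRowAlternating.compLinearMap (LinearMap.pi (fun j => e.coord (σ j)))

lemma psi_apply {i : ℕ} (σ : Fin i → Fin n) (v : Fin i → V) :
    psi e σ v = Matrix.det (Matrix.of fun l j => e.repr (v l) (σ j)) := rfl

noncomputable def phiA (i : ℕ) (σ : Fin i → Fin n) : ExteriorAlgebra k V →ₗ[k] k :=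
  liftAlternating (Function.update 0 i (psi e σ))

lemma phiA_apply_ιMulti (i : ℕ) (σ : Fin i → Fin n) (v : Fin i → V) :
    phiA e i σ (ιMulti k i v) = psi e σ v := by
  rw [phiA, liftAlternating_apply_ιMulti, Function.update_self]

noncomputable def xel (i : ℕ) (σ : Fin i → Fin n) : ExteriorAlgebra k V :=
  ιMulti k i (e ∘ σ)

lemma xel_mem (i : ℕ) (σ : Fin i → Fin n) : xel e i σ ∈ ⋀[k]^i V :=
  ExteriorAlgebra.ιMulti_range k i (Set.mem_range_self _)

lemma card_of_mem {i : ℕ} {S : Finset (Fin n)}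
    (h : S ∈ Finset.powersetCard i (Finset.univ : Finset (Fin n))) : S.card = i :=
  (Finset.mem_powersetCard.mp h).2

lemma key_expansion (i : ℕ) (u : Fin i → Fin n) :
    ∑ S ∈ (Finset.powersetCard i (Finset.univ : Finset (Fin n))).attach,
      psi e (S.1.orderEmbOfFin (card_of_mem S.2)) (e ∘ u) •
        xel e i (S.1.orderEmbOfFin (card_of_mem S.2))
    = ιMulti k i (e ∘ u) := by
  by_cases hu : Function.Injective u
  · set T : Finset (Fin n) := Finset.image u Finset.univ with hTdef
    have hT : T.card = i := by
      rw [Finset.card_image_of_injective _ hu, Finset.card_univ, Fintype.card_fin]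
    have hTmem : T ∈ Finset.powersetCard i (Finset.univ : Finset (Fin n)) :=
      Finset.mem_powersetCard.mpr ⟨Finset.subset_univ _, hT⟩
    have hmemT : ∀ l, u l ∈ T := fun l => Finset.mem_image_of_mem u (Finset.mem_univ l)
    rw [Finset.sum_eq_single_of_mem (⟨T, hTmem⟩ :
        {x // x ∈ Finset.powersetCard i (Finset.univ : Finset (Fin n))}) (Finset.mem_attach _ _)]
    · set σT := T.orderEmbOfFin (card_of_mem hTmem) with hσT
      set π₀ : Fin i → Fin i := fun l => (T.orderIsoOfFin (card_of_mem hTmem)).symm ⟨u l, hmemT l⟩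
        with hπ₀
      have hσπ : ∀ l, σT (π₀ l) = u l := by
        intro l
        rw [hσT, ← Finset.coe_orderIsoOfFin_apply, hπ₀]
        simp
      have hπinj : Function.Injective π₀ := by
        have : u = fun l => σT (π₀ l) := by funext l; rw [hσπ]
        rw [this] at hu
        exact Function.Injective.of_comp (f := σT) hu
      set π : Equiv.Perm (Fin i) := Equiv.ofBijective π₀ (Finite.injective_iff_bijective.mp hπinj)
        with hπ
      have hπap : ∀ l, π l = π₀ l := fun l => rfl
      have hmat : (Matrix.of fun l j => (e.repr ((e ∘ u) l)) (σT j)) = π.permMatrix k := by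
        ext l j
        simp only [Matrix.of_apply, Function.comp_apply, Module.Basis.repr_self,
          Equiv.Perm.permMatrix, PEquiv.toMatrix_apply, Equiv.toPEquiv_apply,
          Option.mem_def, Option.some.injEq, Finsupp.single_apply]
        rw [hπap, ← hσπ l]
        by_cases h : π₀ l = j
        · simp [h]
        · simp [h, fun hc : σT (π₀ l) = σT j => h (σT.injective hc)]
      have hperm : (e ∘ u) = (e ∘ σT) ∘ π := by
        funext l
        simp [Function.comp_apply, hπap, hσπ l]
      rw [psi_apply, hmat, Matrix.det_permutation, xel, hperm,
        AlternatingMap.map_perm]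
      rcases Int.units_eq_one_or (Equiv.Perm.sign π) with hs | hs <;>
        simp [hs]
    · intro S _ hST
      have hS : S.1 ≠ T := fun hc => hST (Subtype.ext hc)
      have hex : ∃ l, u l ∉ S.1 := by
        by_contra hc
        push_neg at hc
        have hsub : T ⊆ S.1 := by
          rw [hTdef]
          intro x hx
          rcases Finset.mem_image.mp hx with ⟨l, _, rfl⟩
          exact hc l
        exact hS ((Finset.eq_of_subset_of_card_le hsub
          (by rw [card_of_mem S.2, hT])).symm)
      rcases hex with ⟨l, hl⟩
      rw [psi_apply]
      have hdet : Matrix.det (Matrix.of fun l j => (e.repr ((e ∘ u) l))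
          (S.1.orderEmbOfFin (card_of_mem S.2) j)) = 0 := by
        apply Matrix.det_eq_zero_of_row_eq_zero l
        intro j
        simp only [Matrix.of_apply, Function.comp_apply, Module.Basis.repr_self, Finsupp.single_apply]
        have hne : u l ≠ S.1.orderEmbOfFin (card_of_mem S.2) j := by
          intro hc
          exact hl (hc ▸ Finset.orderEmbOfFin_mem _ _ _)
        simp [hne]
      rw [hdet, zero_smul]
  · have hcomp : ¬ Function.Injective (e ∘ u) := fun h => hu (Function.Injective.of_comp h)
    rw [AlternatingMap.map_eq_zero_of_not_injective _ _ hcomp]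
    apply Finset.sum_eq_zero
    intro S _
    rw [AlternatingMap.map_eq_zero_of_not_injective _ _ hcomp, zero_smul]

lemma expansion (i : ℕ) (v : Fin i → V) :
    ∑ S ∈ (Finset.powersetCard i (Finset.univ : Finset (Fin n))).attach,
      psi e (S.1.orderEmbOfFin (card_of_mem S.2)) v •
        xel e i (S.1.orderEmbOfFin (card_of_mem S.2))
    = ιMulti k i v := by
  have h := Module.Basis.ext_multilinear (R := k) (M := fun _ => V) (N := ExteriorAlgebra k V)
    (f := ∑ S ∈ (Finset.powersetCard i (Finset.univ : Finset (Fin n))).attach,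
      (LinearMap.toSpanSingleton k _
        (xel e i (S.1.orderEmbOfFin (card_of_mem S.2)))).compMultilinearMap
        (psi e (S.1.orderEmbOfFin (card_of_mem S.2))).toMultilinearMap)
    (g := (ιMulti k i).toMultilinearMap) (fun _ => e) ?_
  · have := congrFun (congrArg (fun F => F.toFun) h) v
    simpa [MultilinearMap.sum_apply, LinearMap.toSpanSingleton_apply] using this
  · intro u
    simpa [MultilinearMap.sum_apply, LinearMap.toSpanSingleton_apply, Function.comp_def]
      using key_expansion e i (fun l => u l)

lemma ambient_id (i : ℕ) {z : ExteriorAlgebra k V} (hz : z ∈ ⋀[k]^i V) :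
    ∑ S ∈ (Finset.powersetCard i (Finset.univ : Finset (Fin n))).attach,
      phiA e i (S.1.orderEmbOfFin (card_of_mem S.2)) z •
        xel e i (S.1.orderEmbOfFin (card_of_mem S.2))
    = z := by
  rw [← ιMulti_span_fixedDegree k i] at hz
  induction hz using Submodule.span_induction with
  | mem x hx =>
    rcases hx with ⟨v, rfl⟩
    simp_rw [phiA_apply_ιMulti]
    exact expansion e i v
  | zero => simp
  | add x y hx hy ihx ihy =>
    simp_rw [map_add, add_smul, Finset.sum_add_distrib, ihx, ihy]
  | smul a x hx ih =>
    simp_rw [map_smul, smul_eq_mul, ← smul_smul, ← Finset.smul_sum, ih]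

include e in
lemma finite_exteriorPower (i : ℕ) : Module.Finite k ↥(⋀[k]^i V) := by
  classical
  rw [Module.Finite.iff_fg]
  refine ⟨Finset.image (fun S => xel e i (S.1.orderEmbOfFin (card_of_mem S.2)))
    (Finset.powersetCard i (Finset.univ : Finset (Fin n))).attach, le_antisymm ?_ ?_⟩
  · rw [Submodule.span_le]
    intro x hx
    simp only [Finset.coe_image, Set.mem_image] at hx
    rcases hx with ⟨S, _, rfl⟩
    exact xel_mem e i _
  · intro z hz
    rw [← ambient_id e i hz]
    refine Submodule.sum_mem _ (fun S _ => Submodule.smul_mem _ _ (Submodule.subset_span ?_))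
    simp only [Finset.coe_image, Set.mem_image]
    exact ⟨S, Finset.mem_coe.mpr (Finset.mem_attach _ _), rfl⟩

lemma trace_eq_sum (f : V →ₗ[k] V) (i : ℕ) :
    LinearMap.trace k (⋀[k]^i V) (exteriorPowerMap i f) =
    ∑ S ∈ (Finset.powersetCard i (Finset.univ : Finset (Fin n))).attach,
      phiA e i (S.1.orderEmbOfFin (card_of_mem S.2))
        (ExteriorAlgebra.map f (xel e i (S.1.orderEmbOfFin (card_of_mem S.2)))) := by
  haveI := finite_exteriorPower e i
  set P := ⋀[k]^i V with hP
  have hrep : exteriorPowerMap i f = ∑ S ∈ (Finset.powersetCard i (Finset.univ : Finset (Fin n))).attach,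
      dualTensorHom k P P
        (((phiA e i (S.1.orderEmbOfFin (card_of_mem S.2))) ∘ₗ P.subtype) ⊗ₜ[k]
          (exteriorPowerMap i f ⟨xel e i (S.1.orderEmbOfFin (card_of_mem S.2)), xel_mem e i _⟩)) := by
    refine LinearMap.ext fun y => ?_
    have hy : (∑ S ∈ (Finset.powersetCard i (Finset.univ : Finset (Fin n))).attach,
        (phiA e i (S.1.orderEmbOfFin (card_of_mem S.2)) (y : ExteriorAlgebra k V)) •
          (⟨xel e i (S.1.orderEmbOfFin (card_of_mem S.2)), xel_mem e i _⟩ : P)) = y := by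
      apply Subtype.ext
      push_cast
      exact ambient_id e i y.2
    conv_lhs => rw [← hy, map_sum]
    simp only [dualTensorHom_apply, map_smul, LinearMap.sum_apply, LinearMap.coe_comp,
      Submodule.coe_subtype, Function.comp_apply]
    exact Finset.sum_congr rfl fun d _ => (dualTensorHom_apply _ _ _).symm
  rw [hrep, map_sum]
  refine Finset.sum_congr rfl (fun S _ => ?_)
  rw [LinearMap.trace_eq_contract_apply, contractLeft_apply]
  simp [coe_exteriorPowerMap]

lemma eval_minor (f : V →ₗ[k] V) (i : ℕ) (σ : Fin i → Fin n) :
    phiA e i σ (ExteriorAlgebra.map f (xel e i σ)) =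
    Matrix.det ((LinearMap.toMatrix e e f).submatrix σ σ) := by
  rw [xel, map_ιMulti, phiA_apply_ιMulti, psi_apply]
  have h : (Matrix.of fun l j => e.repr ((f ∘ e ∘ σ) l) (σ j)) =
      Matrix.transpose ((LinearMap.toMatrix e e f).submatrix σ σ) := by
    ext l j
    simp only [Matrix.transpose_apply, Matrix.submatrix_apply, Matrix.of_apply,
      Function.comp_apply, LinearMap.toMatrix_apply]
  rw [h, Matrix.det_transpose]

lemma trace_eq_sum_minor (f : V →ₗ[k] V) (i : ℕ) :
    LinearMap.trace k (⋀[k]^i V) (exteriorPowerMap i f) =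
    ∑ S ∈ Finset.powersetCard i (Finset.univ : Finset (Fin n)),
      minor (LinearMap.toMatrix e e f) S := by
  rw [trace_eq_sum e f i]
  rw [Finset.sum_congr rfl (fun S (_ : S ∈ (Finset.powersetCard i
      (Finset.univ : Finset (Fin n))).attach) => by
    rw [eval_minor, ← minor_eq _ _ (card_of_mem S.2)])]
  exact Finset.sum_attach _ _

/-! ### A basis adapted to two fixed vectors -/

lemma exists_good_basis [FiniteDimensional k V] (f : V →ₗ[k] V)
    (hfix : 2 ≤ Module.finrank k (LinearMap.ker (f - LinearMap.id))) :
    2 ≤ Module.finrank k V ∧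
    ∃ e : Module.Basis (Fin (Module.finrank k V)) k V,
      (∀ hn : 2 ≤ Module.finrank k V,
        f (e ⟨0, by omega⟩) = e ⟨0, by omega⟩ ∧ f (e ⟨1, by omega⟩) = e ⟨1, by omega⟩) := by
  classical
  set K := LinearMap.ker (f - LinearMap.id) with hK
  obtain ⟨W, hW⟩ := Submodule.exists_isCompl K
  have hrs : Module.finrank k K + Module.finrank k W = Module.finrank k V :=
    Submodule.finrank_add_eq_of_isCompl hW
  have h2 : 2 ≤ Module.finrank k V := le_trans hfix (by omega)
  refine ⟨h2, ?_⟩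
  set r := Module.finrank k K with hr
  set s := Module.finrank k W with hs
  let bK := Module.finBasis k K
  let bW := Module.finBasis k W
  let b0 : Module.Basis (Fin r ⊕ Fin s) k (K × W) := bK.prod bW
  let eqv : (K × W) ≃ₗ[k] V := Submodule.prodEquivOfIsCompl K W hW
  let b1 : Module.Basis (Fin r ⊕ Fin s) k V := b0.map eqv
  let σ : (Fin r ⊕ Fin s) ≃ Fin (Module.finrank k V) := finSumFinEquiv.trans (finCongr hrs)
  refine ⟨b1.reindex σ, fun hn => ?_⟩
  have hval : ∀ (j : Fin r), (b1.reindex σ) (σ (Sum.inl j)) = (bK j : V) := by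
    intro j
    rw [Module.Basis.reindex_apply, Equiv.symm_apply_apply]
    have : b0 (Sum.inl j) = (bK j, 0) := by
      simp [b0, Module.Basis.prod_apply]
    rw [Module.Basis.map_apply, this]
    simp [eqv, Submodule.prodEquivOfIsCompl]
    show ((bK j : V) + ((0 : W) : V)) = _
    simp
  have hfixK : ∀ x : K, f (x : V) = (x : V) := by
    intro x
    have hx : ((f - LinearMap.id : V →ₗ[k] V)) (x : V) = 0 := x.2
    rw [LinearMap.sub_apply, LinearMap.id_apply, sub_eq_zero] at hx
    exact hx
  have hσ : ∀ (j : Fin r), σ (Sum.inl j) = ⟨(j : ℕ), by omega⟩ := by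
    intro j
    apply Fin.ext
    simp [σ, finSumFinEquiv_apply_left]
  constructor
  · have h0 : (⟨0, by omega⟩ : Fin (Module.finrank k V)) = σ (Sum.inl ⟨0, by omega⟩) := by
      rw [hσ]
    rw [h0, hval]
    exact hfixK _
  · have h1 : (⟨1, by omega⟩ : Fin (Module.finrank k V)) = σ (Sum.inl ⟨1, by omega⟩) := by
      rw [hσ]
    rw [h1, hval]
    exact hfixK _

end AWTS

/-- If the fixed subspace of an endomorphism `f` of a finite-dimensional vector space `V`
has dimension at least `2`, then `∑ᵢ (−1)^i · i · Tr(Λ^i f) = 0`. -/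
theorem alternating_weighted_trace_sum_eq_zero
    {k V : Type*} [Field k] [AddCommGroup V] [Module k V] [FiniteDimensional k V]
    (f : V →ₗ[k] V)
    (hfix : 2 ≤ Module.finrank k (LinearMap.ker (f - LinearMap.id))) :
    ∑ i ∈ Finset.range (Module.finrank k V + 1),
      (-1 : k) ^ i * (i : k) *
        LinearMap.trace k (⋀[k]^i V) (exteriorPowerMap i f) = 0 := by
  classical
  obtain ⟨h2, e, hfixe⟩ := AWTS.exists_good_basis f hfix
  obtain ⟨hfix0, hfix1⟩ := hfixe h2
  haveI : NeZero (Module.finrank k V) := ⟨by omega⟩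
  have hz : (⟨0, by omega⟩ : Fin (Module.finrank k V)) = 0 := by
    apply Fin.ext
    simp [Fin.val_zero]
  have ho : (⟨1, by omega⟩ : Fin (Module.finrank k V)) = 1 := by
    apply Fin.ext
    rw [Fin.val_one']
    rw [Nat.mod_eq_of_lt (by omega)]
  rw [hz] at hfix0
  rw [ho] at hfix1
  set M := LinearMap.toMatrix e e f with hM
  have hcol0 : ∀ x, M x 0 = if x = 0 then 1 else 0 := by
    intro x
    rw [hM, LinearMap.toMatrix_apply, hfix0, Module.Basis.repr_self, Finsupp.single_apply]
    exact if_congr eq_comm rfl rfl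
  have hcol1 : ∀ x, M x 1 = if x = 1 then 1 else 0 := by
    intro x
    rw [hM, LinearMap.toMatrix_apply, hfix1, Module.Basis.repr_self, Finsupp.single_apply]
    exact if_congr eq_comm rfl rfl
  have hcard : (Finset.univ : Finset (Fin (Module.finrank k V))).card = (Module.finrank k V) := by simp
  calc ∑ i ∈ Finset.range ((Module.finrank k V) + 1), (-1 : k) ^ i * (i : k) *
        LinearMap.trace k (⋀[k]^i V) (exteriorPowerMap i f)
      = ∑ i ∈ Finset.range ((Module.finrank k V) + 1), ∑ S ∈ Finset.powersetCard i (Finset.univ : Finset (Fin (Module.finrank k V))),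
          (-1 : k) ^ S.card * (S.card : k) * AWTS.minor M S := by
        refine Finset.sum_congr rfl (fun i _ => ?_)
        rw [AWTS.trace_eq_sum_minor e f i, Finset.mul_sum]
        refine Finset.sum_congr rfl (fun S hS => ?_)
        rw [AWTS.card_of_mem hS]
    _ = ∑ S ∈ (Finset.univ : Finset (Fin (Module.finrank k V))).powerset,
          (-1 : k) ^ S.card * (S.card : k) * AWTS.minor M S := by
        rw [Finset.sum_powerset, hcard]
    _ = 0 := AWTS.comb M h2 hcol0 hcol1
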